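/- Suppose there exist positive reals γ̄_1,…,γ̄_K and λ_1,…,λ_K such that γ̄_s − γ̄_t − λ_t (u_t(β_s) − u_t(β_t)) ≥ 0 for all s, t ∈ {1,…,K}. Define g(β) = max_{t} { γ̄_t + λ_t (u_t(β) − u_t(β_t)) }. Then g(β_t) = γ̄_t for every t, and for every t and every β with g(β) ≤ γ̄_t, one has u_t(β) ≤ u_t(β_t); i.e., the constraint sequence {g(β) ≤ γ̄_t} rationalizes the data as constrained utility maximization. -/

import Mathlib

/-- The constructed budget `g(β) = max_t {γ̄_t + λ_t (u_t(β) − u_t(β_t))}`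
rationalizes the data: `g(β_t) = γ̄_t` and `g(β) ≤ γ̄_t → u_t(β) ≤ u_t(β_t)`. -/
theorem stmt_1 {m K : ℕ}
    (u : Fin (K + 1) → (Fin m → ℝ) → ℝ) (β : Fin (K + 1) → Fin m → ℝ)
    (γ lam : Fin (K + 1) → ℝ)
    (hγ : ∀ t, 0 < γ t) (hlam : ∀ t, 0 < lam t)
    (hineq : ∀ s t, 0 ≤ γ s - γ t - lam t * (u t (β s) - u t (β t)))
    (g : (Fin m → ℝ) → ℝ)
    (hg : ∀ x, g x = Finset.univ.sup' Finset.univ_nonempty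
      (fun t => γ t + lam t * (u t x - u t (β t)))) :
    (∀ t, g (β t) = γ t) ∧
    (∀ t (x : Fin m → ℝ), g x ≤ γ t → u t x ≤ u t (β t)) := by
  constructor
  · intro t
    rw [hg]
    apply le_antisymm
    · apply Finset.sup'_le
      intro s _
      have := hineq t s
      linarith
    · have h := Finset.le_sup' (s := (Finset.univ : Finset (Fin (K+1)))) ((fun s => γ s + lam s * (u s (β t) - u s (β s)) : Fin (K+1) → ℝ)) (Finset.mem_univ t)
      calc γ t = γ t + lam t * (u t (β t) - u t (β t)) := by ring
        _ ≤ _ := h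
  · intro t x hx
    have h1 : γ t + lam t * (u t x - u t (β t)) ≤ g x := by
      rw [hg]
      exact Finset.le_sup' (fun s => γ s + lam s * (u s x - u s (β s))) (Finset.mem_univ t)
    have h2 : lam t * (u t x - u t (β t)) ≤ 0 := by linarith
    nlinarith [hlam t]
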